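/- Let f, φ : 𝒳 → ℝ be twice continuously differentiable on an open convex set 𝒳 ⊆ ℝ^d, with ∇²φ(x) positive definite. If ‖∇f(x') − ∇f(x)‖ ≤ M·‖∇φ(x') − ∇φ(x)‖ for all x, x' ∈ 𝒳, then ∇²f(x) ⪯ M·∇²φ(x) for all x ∈ 𝒳. -/

import Mathlib

open InnerProductSpace

open InnerProductSpace

lemma psd_zero_eval {E : Type*} [NormedAddCommGroup E] [InnerProductSpace ℝ E]
    (T : E →L[ℝ] E) (hsym : ∀ v w : E, ⟪T v, w⟫_ℝ = ⟪T w, v⟫_ℝ)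
    (hpsd : ∀ v : E, 0 ≤ ⟪T v, v⟫_ℝ) (v₀ : E) (h0 : ⟪T v₀, v₀⟫_ℝ = 0) :
    T v₀ = 0 := by
  have key : ∀ w : E, ⟪T v₀, w⟫_ℝ = 0 := by
    intro w
    set a := ⟪T v₀, w⟫_ℝ with ha
    set c := ⟪T w, w⟫_ℝ with hcd
    have hc : 0 ≤ c := hpsd w
    have hq : ∀ t : ℝ, 0 ≤ 2*t*a + t^2*c := by
      intro t
      have h1 := hpsd (v₀ + t • w)
      have expand : ⟪T (v₀ + t • w), v₀ + t • w⟫_ℝ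
          = ⟪T v₀, v₀⟫_ℝ + 2*t*a + t^2*c := by
        have : T (v₀ + t • w) = T v₀ + t • T w := by
          simp [map_add, map_smul]
        rw [this, inner_add_left, inner_add_right, inner_add_right,
          real_inner_smul_left, real_inner_smul_left, real_inner_smul_right,
          real_inner_smul_right, hsym w v₀]
        ring
      rw [expand, h0] at h1
      linarith
    rcases eq_or_lt_of_le hc with hc0 | hc0
    · have h1 := hq 1
      have h2 := hq (-1)
      rw [← hc0] at h1 h2
      nlinarith
    · have h := hq (-(a/c))
      have hane : a ^ 2 ≤ 0 := by
        have h2 : 2 * (-(a/c)) * a + (-(a/c))^2 * c = -(a^2/c) := by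
          field_simp
          ring
        rw [h2] at h
        have h5 : a^2/c ≤ 0 := by linarith
        have h3 : a^2 / c * c = a^2 := div_mul_cancel₀ _ hc0.ne'
        nlinarith [mul_le_mul_of_nonneg_right h5 hc0.le]
      nlinarith [sq_nonneg a]
  have h2 := key (T v₀)
  exact inner_self_eq_zero.mp h2

lemma key_ineq {d : ℕ} (A B : EuclideanSpace ℝ (Fin d) →L[ℝ] EuclideanSpace ℝ (Fin d))
    (hA : ∀ v w, ⟪A v, w⟫_ℝ = ⟪A w, v⟫_ℝ)
    (hB : ∀ v w, ⟪B v, w⟫_ℝ = ⟪B w, v⟫_ℝ)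
    (hBpos : ∀ v, v ≠ 0 → 0 < ⟪B v, v⟫_ℝ)
    (M : ℝ) (hM : 0 < M)
    (h : ∀ v, ‖A v‖ ≤ M * ‖B v‖) (v : EuclideanSpace ℝ (Fin d)) :
    ⟪A v, v⟫_ℝ ≤ M * ⟪B v, v⟫_ℝ := by
  rcases eq_or_ne v 0 with rfl | hv
  · simp
  -- set up of the sphere
  have hE : True := trivial
  have hvnorm : ‖v‖ ≠ 0 := norm_ne_zero_iff.mpr hv
  have hsphne : (‖v‖⁻¹ • v) ∈ Metric.sphere (0 : EuclideanSpace ℝ (Fin d)) 1 := by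
    simp [norm_smul, abs_of_nonneg (inv_nonneg.mpr (norm_nonneg v)),
      inv_mul_cancel₀ hvnorm]
  have hcont : ContinuousOn (fun w : EuclideanSpace ℝ (Fin d) => ⟪A w, w⟫_ℝ / ⟪B w, w⟫_ℝ)
      (Metric.sphere (0 : EuclideanSpace ℝ (Fin d)) 1) := by
    apply ContinuousOn.div
    · exact (Continuous.inner (A.continuous) continuous_id).continuousOn
    · exact (Continuous.inner (B.continuous) continuous_id).continuousOn
    · intro w hw
      have hw0 : w ≠ 0 := by
        intro h0; rw [h0] at hw; simp at hw
      exact (hBpos w hw0).ne'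
  obtain ⟨v₀, hv₀S, hmax⟩ := (isCompact_sphere (0 : EuclideanSpace ℝ (Fin d)) 1).exists_isMaxOn
    ⟨_, hsphne⟩ hcont
  have hv₀0 : v₀ ≠ 0 := by
    intro h0; rw [h0] at hv₀S; simp at hv₀S
  set m := ⟪A v₀, v₀⟫_ℝ / ⟪B v₀, v₀⟫_ℝ with hm
  have hBv₀ : 0 < ⟪B v₀, v₀⟫_ℝ := hBpos v₀ hv₀0
  have hQ : ∀ w : EuclideanSpace ℝ (Fin d), ⟪A w, w⟫_ℝ ≤ m * ⟪B w, w⟫_ℝ := by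
    intro w
    rcases eq_or_ne w 0 with rfl | hw
    · simp
    have hwn : ‖w‖ ≠ 0 := norm_ne_zero_iff.mpr hw
    have hu : (‖w‖⁻¹ • w) ∈ Metric.sphere (0 : EuclideanSpace ℝ (Fin d)) 1 := by
      simp [norm_smul, abs_of_nonneg (inv_nonneg.mpr (norm_nonneg w)),
        inv_mul_cancel₀ hwn]
    have hle := hmax hu
    simp only [Set.mem_setOf_eq] at hle
    have hBu : 0 < ⟪B (‖w‖⁻¹ • w), (‖w‖⁻¹ • w)⟫_ℝ :=
      hBpos _ (smul_ne_zero (inv_ne_zero hwn) hw)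
    have hle' : ⟪A (‖w‖⁻¹ • w), (‖w‖⁻¹ • w)⟫_ℝ ≤ m * ⟪B (‖w‖⁻¹ • w), (‖w‖⁻¹ • w)⟫_ℝ := by
      have := (div_le_iff₀ hBu).mp hle
      linarith
    have hAsc : ⟪A (‖w‖⁻¹ • w), (‖w‖⁻¹ • w)⟫_ℝ = ‖w‖⁻¹ * ‖w‖⁻¹ * ⟪A w, w⟫_ℝ := by
      rw [map_smul, real_inner_smul_left, real_inner_smul_right]; ring
    have hBsc : ⟪B (‖w‖⁻¹ • w), (‖w‖⁻¹ • w)⟫_ℝ = ‖w‖⁻¹ * ‖w‖⁻¹ * ⟪B w, w⟫_ℝ := by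
      rw [map_smul, real_inner_smul_left, real_inner_smul_right]; ring
    rw [hAsc, hBsc] at hle'
    have hwpos : 0 < ‖w‖⁻¹ * ‖w‖⁻¹ := by positivity
    calc ⟪A w, w⟫_ℝ = (‖w‖⁻¹ * ‖w‖⁻¹ * ⟪A w, w⟫_ℝ) / (‖w‖⁻¹ * ‖w‖⁻¹) := by
          field_simp
      _ ≤ (m * (‖w‖⁻¹ * ‖w‖⁻¹ * ⟪B w, w⟫_ℝ)) / (‖w‖⁻¹ * ‖w‖⁻¹) := by
          gcongr
      _ = m * ⟪B w, w⟫_ℝ := by field_simp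
  have hQ0 : ⟪A v₀, v₀⟫_ℝ = m * ⟪B v₀, v₀⟫_ℝ := by
    rw [hm, div_mul_cancel₀ _ hBv₀.ne']
  -- T = m • B - A is symmetric PSD, zero at v₀
  set T : EuclideanSpace ℝ (Fin d) →L[ℝ] EuclideanSpace ℝ (Fin d) := m • B - A with hT
  have hTapp : ∀ w, T w = m • B w - A w := fun w => rfl
  have hTsym : ∀ u w, ⟪T u, w⟫_ℝ = ⟪T w, u⟫_ℝ := by
    intro u w
    simp only [hTapp, inner_sub_left, real_inner_smul_left, hA u w, hB u w]
  have hTpsd : ∀ w, 0 ≤ ⟪T w, w⟫_ℝ := by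
    intro w
    simp only [hTapp, inner_sub_left, real_inner_smul_left]
    linarith [hQ w]
  have hT0 : ⟪T v₀, v₀⟫_ℝ = 0 := by
    simp only [hTapp, inner_sub_left, real_inner_smul_left]
    linarith
  have hTv₀ : T v₀ = 0 := psd_zero_eval T hTsym hTpsd v₀ hT0
  have hAv₀ : A v₀ = m • B v₀ := by
    have h1 : m • B v₀ - A v₀ = 0 := hTv₀
    exact (sub_eq_zero.mp h1).symm
  have hnormA : ‖A v₀‖ = |m| * ‖B v₀‖ := by
    rw [hAv₀, norm_smul, Real.norm_eq_abs]
  have hBv₀ne : B v₀ ≠ 0 := by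
    intro h0
    rw [h0] at hBv₀
    simp at hBv₀
  have hBn : 0 < ‖B v₀‖ := norm_pos_iff.mpr hBv₀ne
  have hmM : m ≤ M := by
    have hh := h v₀
    rw [hnormA] at hh
    have : |m| ≤ M := le_of_mul_le_mul_right hh hBn
    exact (le_abs_self m).trans this
  calc ⟪A v, v⟫_ℝ ≤ m * ⟪B v, v⟫_ℝ := hQ v
    _ ≤ M * ⟪B v, v⟫_ℝ := mul_le_mul_of_nonneg_right hmM (hBpos v hv).le


/-- Relative smoothness via gradients implies `∇²f(x) ⪯ M ∇²φ(x)` in the Loewner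
order: if `‖∇f(x') - ∇f(x)‖ ≤ M ‖∇φ(x') - ∇φ(x)‖` on an open convex set where
`∇²φ ≻ 0`, then `⟨∇²f(x) v, v⟩ ≤ M ⟨∇²φ(x) v, v⟩` for all `x ∈ 𝒳`, `v`. -/
theorem stmt_5 {d : ℕ} (𝒳 : Set (EuclideanSpace ℝ (Fin d)))
    (hopen : IsOpen 𝒳) (hconv : Convex ℝ 𝒳)
    (f φ : EuclideanSpace ℝ (Fin d) → ℝ)
    (hf : ContDiffOn ℝ 2 f 𝒳) (hφ : ContDiffOn ℝ 2 φ 𝒳)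
    (Df Dφ : EuclideanSpace ℝ (Fin d) → EuclideanSpace ℝ (Fin d))
    (hDf : ∀ x ∈ 𝒳, HasGradientAt f (Df x) x)
    (hDφ : ∀ x ∈ 𝒳, HasGradientAt φ (Dφ x) x)
    (Hf Hφ : EuclideanSpace ℝ (Fin d) →
      EuclideanSpace ℝ (Fin d) →L[ℝ] EuclideanSpace ℝ (Fin d))
    (hHf : ∀ x ∈ 𝒳, HasFDerivAt Df (Hf x) x)
    (hHφ : ∀ x ∈ 𝒳, HasFDerivAt Dφ (Hφ x) x)
    (hpos : ∀ x ∈ 𝒳, ∀ v : EuclideanSpace ℝ (Fin d), v ≠ 0 → (0 : ℝ) < inner ℝ (Hφ x v) v)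
    (M : ℝ) (hM : 0 < M)
    (hsm : ∀ x ∈ 𝒳, ∀ x' ∈ 𝒳,
      ‖Df x' - Df x‖ ≤ M * ‖Dφ x' - Dφ x‖) :
    ∀ x ∈ 𝒳, ∀ v : EuclideanSpace ℝ (Fin d),
      (inner ℝ (Hf x v) v : ℝ) ≤ M * inner ℝ (Hφ x v) v := by
  intro x hx v
  -- Step 1: ‖Hf x u‖ ≤ M ‖Hφ x u‖ for all u, by differentiating along lines
  have hnb : ∀ u : EuclideanSpace ℝ (Fin d), ‖Hf x u‖ ≤ M * ‖Hφ x u‖ := by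
    intro u
    have hc : HasDerivAt (fun t : ℝ => x + t • u) u 0 := by
      simpa using ((hasDerivAt_id (0 : ℝ)).smul_const u).const_add x
    have hc0 : x + (0 : ℝ) • u = x := by simp
    have hdf : HasDerivAt (fun t : ℝ => Df (x + t • u)) (Hf x u) 0 := by
      have h1 : HasFDerivAt Df (Hf x) ((fun t : ℝ => x + t • u) 0) := by
        simpa [hc0] using hHf x hx
      exact h1.comp_hasDerivAt 0 hc
    have hdφ : HasDerivAt (fun t : ℝ => Dφ (x + t • u)) (Hφ x u) 0 := by
      have h1 : HasFDerivAt Dφ (Hφ x) ((fun t : ℝ => x + t • u) 0) := by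
        simpa [hc0] using hHφ x hx
      exact h1.comp_hasDerivAt 0 hc
    have hsub : Set.Ioi (0 : ℝ) ⊆ {(0 : ℝ)}ᶜ := fun t ht => ne_of_gt ht
    have hTf : Filter.Tendsto (fun t => ‖slope (fun t : ℝ => Df (x + t • u)) 0 t‖)
        (nhdsWithin 0 (Set.Ioi 0)) (nhds ‖Hf x u‖) :=
      ((hasDerivAt_iff_tendsto_slope.mp hdf).mono_left
        (nhdsWithin_mono 0 hsub)).norm
    have hTφ : Filter.Tendsto (fun t => M * ‖slope (fun t : ℝ => Dφ (x + t • u)) 0 t‖)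
        (nhdsWithin 0 (Set.Ioi 0)) (nhds (M * ‖Hφ x u‖)) :=
      (((hasDerivAt_iff_tendsto_slope.mp hdφ).mono_left
        (nhdsWithin_mono 0 hsub)).norm).const_mul M
    have hmem : ∀ᶠ t in nhds (0 : ℝ), x + t • u ∈ 𝒳 := by
      have hcont : Continuous fun t : ℝ => x + t • u := by continuity
      have := hcont.tendsto 0
      rw [hc0] at this
      exact this (hopen.mem_nhds hx)
    have hev : ∀ᶠ t in nhdsWithin (0 : ℝ) (Set.Ioi 0),
        ‖slope (fun t : ℝ => Df (x + t • u)) 0 t‖ ≤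
          M * ‖slope (fun t : ℝ => Dφ (x + t • u)) 0 t‖ := by
      filter_upwards [nhdsWithin_le_nhds hmem] with t hmemt
      have hts : ‖Df (x + t • u) - Df x‖ ≤ M * ‖Dφ (x + t • u) - Dφ x‖ :=
        hsm x hx _ hmemt
      have hsl1 : slope (fun t : ℝ => Df (x + t • u)) 0 t
          = (t : ℝ)⁻¹ • (Df (x + t • u) - Df x) := by
        simp [slope, hc0]
      have hsl2 : slope (fun t : ℝ => Dφ (x + t • u)) 0 t
          = (t : ℝ)⁻¹ • (Dφ (x + t • u) - Dφ x) := by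
        simp [slope, hc0]
      rw [hsl1, hsl2, norm_smul, norm_smul]
      calc ‖(t : ℝ)⁻¹‖ * ‖Df (x + t • u) - Df x‖
          ≤ ‖(t : ℝ)⁻¹‖ * (M * ‖Dφ (x + t • u) - Dφ x‖) :=
            mul_le_mul_of_nonneg_left hts (norm_nonneg _)
        _ = M * (‖(t : ℝ)⁻¹‖ * ‖Dφ (x + t • u) - Dφ x‖) := by ring
    exact le_of_tendsto_of_tendsto hTf hTφ hev
  -- Step 2: symmetry of the Hessians
  have hsymm : ∀ (D : EuclideanSpace ℝ (Fin d) → EuclideanSpace ℝ (Fin d))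
      (H : EuclideanSpace ℝ (Fin d) →
        EuclideanSpace ℝ (Fin d) →L[ℝ] EuclideanSpace ℝ (Fin d))
      (g : EuclideanSpace ℝ (Fin d) → ℝ),
      (∀ y ∈ 𝒳, HasGradientAt g (D y) y) → (∀ y ∈ 𝒳, HasFDerivAt D (H y) y) →
      ∀ u w, ⟪H x u, w⟫_ℝ = ⟪H x w, u⟫_ℝ := by
    intro D H g hD hH u w
    set L : EuclideanSpace ℝ (Fin d) →L[ℝ]
        (EuclideanSpace ℝ (Fin d) →L[ℝ] ℝ) :=
      (innerSL ℝ : EuclideanSpace ℝ (Fin d) →L[ℝ] _) with hLdef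
    have hev : ∀ᶠ y in nhds x, HasFDerivAt g (L (D y)) y := by
      filter_upwards [hopen.mem_nhds hx] with y hy
      have h1 := (hD y hy).hasFDerivAt
      have h2 : L (D y) = InnerProductSpace.toDual ℝ _ (D y) := by
        ext w
        rw [hLdef, InnerProductSpace.toDual_apply_apply, innerSL_apply_apply]
      rw [h2]
      exact h1
    have hL : HasFDerivAt (fun y => L (D y)) (L.comp (H x)) x :=
      (L.hasFDerivAt).comp x (hH x hx)
    have := second_derivative_symmetric_of_eventually hev hL u w
    simp [hLdef, InnerProductSpace.toDual_apply_apply, innerSL_apply_apply] at this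
    exact this
  exact key_ineq (Hf x) (Hφ x) (hsymm Df Hf f hDf hHf) (hsymm Dφ Hφ φ hDφ hHφ)
    (hpos x hx) M hM hnb v
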